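/- Let α : ℤ → ℝ be a finitely supported mask and γ : ℤ → ℝ an absolutely summable sequence. Fix J ∈ ℕ with J ≥ 1 and a bounded sequence c^{(J)} : ℤ → ℝ, and define the analysis recursively by c^{(ℓ−1)} = D_γ c^{(ℓ)} and d^{(ℓ)} = c^{(ℓ)} − S_α c^{(ℓ−1)} for ℓ = J,…,1. Define q^{(ℓ)} by q^{(ℓ)}_j = d^{(ℓ)}_j for odd j and q^{(ℓ)}_j = 0 for even j, and synthesize ζ^{(0)} = c^{(0)}, ζ^{(ℓ)} = S_α ζ^{(ℓ−1)} + q^{(ℓ)} for ℓ = 1,…,J. Then sup_{j∈ℤ}|c^{(J)}_j − ζ^{(J)}_j| ≤ ∑_{ℓ=1}^{J} ‖S_α‖^{J−ℓ} · sup_{j∈ℤ}|d^{(ℓ)}_{2j}|, where ‖S_α‖ = max{∑_{k}|α_{2k}|, ∑_{k}|α_{2k+1}|} is the operator norm of S_α on ℓ_∞(ℤ). In particular, with C = max{1, ‖S_α‖^J}, the reconstruction error after discarding all even-indexed detail coefficients satisfies ‖c^{(J)} − ζ^{(J)}‖_∞ ≤ C·∑_{ℓ=1}^{J} ‖d^{(ℓ)}↓2‖_∞.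 -/

import Mathlib

/-- The subdivision operator `(S_α c)_j = ∑_{k∈ℤ} α_{j-2k} c_k`. -/
noncomputable def subdivision (α : ℤ → ℝ) (c : ℤ → ℝ) : ℤ → ℝ :=
  fun j => ∑' k : ℤ, α (j - 2 * k) * c k

/-- The decimation operator `(D_γ c)_j = ∑_{k∈ℤ} γ_{j-k} c_{2k}`. -/
noncomputable def decimation (γ : ℤ → ℝ) (c : ℤ → ℝ) : ℤ → ℝ :=
  fun j => ∑' k : ℤ, γ (j - k) * c (2 * k)

lemma abs_tsum_le_tsum_abs' (f : ℤ → ℝ) (h : Summable fun k => |f k|) :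
    |∑' k, f k| ≤ ∑' k, |f k| := by
  have h' : Summable fun k => ‖f k‖ := h
  have := norm_tsum_le_tsum_norm h'
  simpa [Real.norm_eq_abs] using this

lemma summable_mask (α : ℤ → ℝ) (hα : (Function.support α).Finite)
    (c : ℤ → ℝ) (j : ℤ) : Summable (fun k : ℤ => α (j - 2 * k) * c k) := by
  apply summable_of_ne_finset_zero (s := hα.toFinset.image (fun m => (j - m) / 2))
  intro k hk
  by_contra h
  have hα' : α (j - 2 * k) ≠ 0 := fun h0 => h (by rw [h0]; ring)
  exact hk (Finset.mem_image.2 ⟨j - 2 * k, hα.mem_toFinset.2 hα', by omega⟩)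

lemma summable_mask_abs (α : ℤ → ℝ) (hα : (Function.support α).Finite) (j : ℤ) :
    Summable (fun k : ℤ => |α (j - 2 * k)|) := by
  apply summable_of_ne_finset_zero (s := hα.toFinset.image (fun m => (j - m) / 2))
  intro k hk
  rw [abs_eq_zero]
  by_contra h
  exact hk (Finset.mem_image.2 ⟨j - 2 * k, hα.mem_toFinset.2 h, by omega⟩)

lemma tsum_abs_mask_le (α : ℤ → ℝ) (j : ℤ) :
    (∑' k : ℤ, |α (j - 2 * k)|) ≤
      max (∑' k : ℤ, |α (2 * k)|) (∑' k : ℤ, |α (2 * k + 1)|) := by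
  rcases Int.even_or_odd j with ⟨m, hm⟩ | ⟨m, hm⟩
  · have h1 : (∑' k : ℤ, |α (j - 2 * k)|) = ∑' k : ℤ, |α (2 * k)| := by
      rw [← (Equiv.subLeft m).tsum_eq (fun k => |α (2 * k)|)]
      apply tsum_congr; intro k
      simp only [Equiv.subLeft_apply]
      have h2 : j - 2 * k = 2 * (m - k) := by omega
      rw [h2]
    rw [h1]; exact le_max_left _ _
  · have h1 : (∑' k : ℤ, |α (j - 2 * k)|) = ∑' k : ℤ, |α (2 * k + 1)| := by
      rw [← (Equiv.subLeft m).tsum_eq (fun k => |α (2 * k + 1)|)]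
      apply tsum_congr; intro k
      simp only [Equiv.subLeft_apply]
      have h2 : j - 2 * k = 2 * (m - k) + 1 := by omega
      rw [h2]
    rw [h1]; exact le_max_right _ _

lemma subdivision_bound (α : ℤ → ℝ) (hα : (Function.support α).Finite)
    (c : ℤ → ℝ) (M : ℝ) (hM : ∀ k, |c k| ≤ M) (j : ℤ) :
    |subdivision α c j| ≤
      max (∑' k : ℤ, |α (2 * k)|) (∑' k : ℤ, |α (2 * k + 1)|) * M := by
  have hM0 : 0 ≤ M := le_trans (abs_nonneg _) (hM 0)
  have hsum := summable_mask α hα c j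
  have habs : Summable (fun k : ℤ => |α (j - 2 * k) * c k|) := hsum.abs
  have hαa := summable_mask_abs α hα j
  have h1 : |subdivision α c j| ≤ ∑' k : ℤ, |α (j - 2 * k) * c k| :=
    abs_tsum_le_tsum_abs' _ habs
  have h2 : (∑' k : ℤ, |α (j - 2 * k) * c k|) ≤ ∑' k : ℤ, |α (j - 2 * k)| * M := by
    apply Summable.tsum_le_tsum _ habs (hαa.mul_right M)
    intro k
    rw [abs_mul]
    exact mul_le_mul_of_nonneg_left (hM k) (abs_nonneg _)
  have h3 : (∑' k : ℤ, |α (j - 2 * k)| * M) = (∑' k : ℤ, |α (j - 2 * k)|) * M :=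
    tsum_mul_right
  have h4 := mul_le_mul_of_nonneg_right (tsum_abs_mask_le α j) hM0
  linarith

lemma subdivision_sub (α : ℤ → ℝ) (hα : (Function.support α).Finite)
    (c c' : ℤ → ℝ) (j : ℤ) :
    subdivision α c j - subdivision α c' j
      = subdivision α (fun k => c k - c' k) j := by
  unfold subdivision
  rw [← Summable.tsum_sub (summable_mask α hα c j) (summable_mask α hα c' j)]
  exact tsum_congr fun k => by ring

lemma decimation_bound (γ : ℤ → ℝ) (hγ : Summable fun k : ℤ => |γ k|)
    (c : ℤ → ℝ) (M : ℝ) (hM : ∀ k, |c k| ≤ M) (j : ℤ) :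
    |decimation γ c j| ≤ (∑' k : ℤ, |γ k|) * M := by
  have hM0 : 0 ≤ M := le_trans (abs_nonneg _) (hM 0)
  have hγ' : Summable (fun k : ℤ => |γ (j - k)|) := by
    have := (Equiv.subLeft j).summable_iff.2 hγ
    simpa [Function.comp_def] using this
  have habs : Summable (fun k : ℤ => |γ (j - k) * c (2 * k)|) := by
    apply Summable.of_nonneg_of_le (fun k => abs_nonneg _) _ (hγ'.mul_right M)
    intro k
    rw [abs_mul]
    exact mul_le_mul_of_nonneg_left (hM _) (abs_nonneg _)
  have h1 : |decimation γ c j| ≤ ∑' k : ℤ, |γ (j - k) * c (2 * k)| :=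
    abs_tsum_le_tsum_abs' _ habs
  have h2 : (∑' k : ℤ, |γ (j - k) * c (2 * k)|) ≤ ∑' k : ℤ, |γ (j - k)| * M := by
    apply Summable.tsum_le_tsum _ habs (hγ'.mul_right M)
    intro k
    rw [abs_mul]
    exact mul_le_mul_of_nonneg_left (hM _) (abs_nonneg _)
  have h3 : (∑' k : ℤ, |γ (j - k)| * M) = (∑' k : ℤ, |γ (j - k)|) * M := tsum_mul_right
  have h4 : (∑' k : ℤ, |γ (j - k)|) = ∑' k : ℤ, |γ k| :=
    (Equiv.subLeft j).tsum_eq (fun k => |γ k|)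
  rw [h4] at h3
  linarith

theorem synthesis_reconstruction_error (α γ : ℤ → ℝ)
    (hα : (Function.support α).Finite)
    (hγ : Summable fun k : ℤ => |γ k|)
    (J : ℕ) (hJ : 1 ≤ J) (cJ : ℤ → ℝ)
    (hc : BddAbove (Set.range fun j : ℤ => |cJ j|))
    (cseq : ℕ → ℤ → ℝ) (hcseq : ∀ ℓ : ℕ, cseq ℓ = (decimation γ)^[J - ℓ] cJ)
    (d : ℕ → ℤ → ℝ)
    (hd : ∀ ℓ : ℕ, 1 ≤ ℓ → ℓ ≤ J → ∀ j : ℤ,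
      d ℓ j = cseq ℓ j - subdivision α (cseq (ℓ - 1)) j)
    (q : ℕ → ℤ → ℝ)
    (hq : ∀ ℓ : ℕ, ∀ j : ℤ, q ℓ j = if Odd j then d ℓ j else 0)
    (ζ : ℕ → ℤ → ℝ) (hζ0 : ζ 0 = cseq 0)
    (hζ : ∀ ℓ : ℕ, 1 ≤ ℓ → ℓ ≤ J → ∀ j : ℤ,
      ζ ℓ j = subdivision α (ζ (ℓ - 1)) j + q ℓ j) :
    ∀ j : ℤ, |cJ j - ζ J j| ≤
      ∑ ℓ ∈ Finset.Icc 1 J,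
        (max (∑' k : ℤ, |α (2 * k)|) (∑' k : ℤ, |α (2 * k + 1)|)) ^ (J - ℓ) *
          (⨆ i : ℤ, |d ℓ (2 * i)|) := by
  set N := max (∑' k : ℤ, |α (2 * k)|) (∑' k : ℤ, |α (2 * k + 1)|) with hN
  have hN0 : 0 ≤ N := le_trans (tsum_nonneg fun k => abs_nonneg _) (le_max_left _ _)
  -- boundedness of cJ
  obtain ⟨M0, hM0⟩ := hc
  have hcJ : ∀ k, |cJ k| ≤ M0 := fun k => hM0 ⟨k, rfl⟩
  -- boundedness of iterated decimations
  have hiter : ∀ n : ℕ, ∃ M, ∀ k, |(decimation γ)^[n] cJ k| ≤ M := by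
    intro n
    induction n with
    | zero => exact ⟨M0, by simpa using hcJ⟩
    | succ n ih =>
      obtain ⟨M, hM⟩ := ih
      refine ⟨(∑' k : ℤ, |γ k|) * M, ?_⟩
      intro k
      rw [Function.iterate_succ_apply']
      exact decimation_bound γ hγ _ M hM k
  have hcs : ∀ ℓ : ℕ, ∃ M, ∀ k, |cseq ℓ k| ≤ M := by
    intro ℓ; rw [hcseq ℓ]; exact hiter _
  -- boundedness of details
  have hdb : ∀ ℓ : ℕ, 1 ≤ ℓ → ℓ ≤ J → ∃ M, ∀ k, |d ℓ k| ≤ M := by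
    intro ℓ h1 h2
    obtain ⟨M, hM⟩ := hcs ℓ
    obtain ⟨M', hM'⟩ := hcs (ℓ - 1)
    refine ⟨M + N * M', ?_⟩
    intro k
    rw [hd ℓ h1 h2 k]
    calc |cseq ℓ k - subdivision α (cseq (ℓ - 1)) k|
        ≤ |cseq ℓ k| + |subdivision α (cseq (ℓ - 1)) k| := abs_sub _ _
      _ ≤ M + N * M' := add_le_add (hM k) (subdivision_bound α hα _ M' hM' k)
  -- the even-sample sup bounds
  have hDsup : ∀ ℓ : ℕ, 1 ≤ ℓ → ℓ ≤ J →
      (∀ i : ℤ, |d ℓ (2 * i)| ≤ ⨆ i : ℤ, |d ℓ (2 * i)|) ∧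
        0 ≤ ⨆ i : ℤ, |d ℓ (2 * i)| := by
    intro ℓ h1 h2
    obtain ⟨M, hM⟩ := hdb ℓ h1 h2
    have hbdd : BddAbove (Set.range fun i : ℤ => |d ℓ (2 * i)|) :=
      ⟨M, by rintro x ⟨i, rfl⟩; exact hM _⟩
    have hle : ∀ i : ℤ, |d ℓ (2 * i)| ≤ ⨆ i : ℤ, |d ℓ (2 * i)| :=
      fun i => le_ciSup hbdd i
    exact ⟨hle, le_trans (abs_nonneg _) (hle 0)⟩
  -- main induction
  have key : ∀ ℓ : ℕ, ℓ ≤ J → ∀ j : ℤ,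
      |cseq ℓ j - ζ ℓ j| ≤
        ∑ i ∈ Finset.Icc 1 ℓ, N ^ (ℓ - i) * (⨆ i' : ℤ, |d i (2 * i')|) := by
    intro ℓ
    induction ℓ with
    | zero =>
      intro _ j
      simp [hζ0]
    | succ n ih =>
      intro h j
      have hn : n ≤ J := Nat.le_of_succ_le h
      have h1n : 1 ≤ n + 1 := Nat.succ_le_succ (Nat.zero_le n)
      set S := ∑ i ∈ Finset.Icc 1 n, N ^ (n - i) * (⨆ i' : ℤ, |d i (2 * i')|) with hS
      obtain ⟨hle, hnonneg⟩ := hDsup (n + 1) h1n h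
      -- identity
      have hid : cseq (n + 1) j - ζ (n + 1) j =
          subdivision α (fun k => cseq n k - ζ n k) j + (d (n + 1) j - q (n + 1) j) := by
        have e1 := hd (n + 1) h1n h j
        have e2 := hζ (n + 1) h1n h j
        simp only [Nat.add_sub_cancel] at e1 e2
        have e3 := subdivision_sub α hα (cseq n) (ζ n) j
        linarith [e3]
      rw [hid]
      have hb1 : |subdivision α (fun k => cseq n k - ζ n k) j| ≤ N * S :=
        subdivision_bound α hα _ S (ih hn) j
      have hb2 : |d (n + 1) j - q (n + 1) j| ≤ ⨆ i' : ℤ, |d (n + 1) (2 * i')| := by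
        rw [hq (n + 1) j]
        by_cases hj : Odd j
        · simp [hj, hnonneg]
        · simp only [hj, if_false, sub_zero]
          obtain ⟨i, hi⟩ := Int.not_odd_iff_even.mp hj
          rw [show j = 2 * i by omega]
          exact hle i
      have htot : |subdivision α (fun k => cseq n k - ζ n k) j + (d (n + 1) j - q (n + 1) j)|
          ≤ N * S + (⨆ i' : ℤ, |d (n + 1) (2 * i')|) :=
        le_trans (abs_add_le _ _) (add_le_add hb1 hb2)
      refine le_trans htot (le_of_eq ?_)
      rw [Finset.sum_Icc_succ_top h1n]
      have hNS : N * S = ∑ i ∈ Finset.Icc 1 n, N ^ (n + 1 - i) * (⨆ i' : ℤ, |d i (2 * i')|) := by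
        rw [hS, Finset.mul_sum]
        apply Finset.sum_congr rfl
        intro i hi
        have hi' : 1 ≤ i ∧ i ≤ n := Finset.mem_Icc.mp hi
        have hpow : n + 1 - i = (n - i) + 1 := by omega
        rw [hpow, pow_succ]
        ring
      rw [hNS]
      simp
  have hJJ : cseq J = cJ := by rw [hcseq J]; simp
  intro j
  have := key J le_rfl j
  rwa [hJJ] at this
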